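/- Let K > 0, μ > 0, let ε be a real symmetric 3 × 3 matrix with spectral positive/negative parts ε± = Σᵢ ⟨λᵢ⟩± Nᵢ Nᵢᵀ, and define the split invariants I₁±(ε) = ⟨tr ε⟩± and I₂±(ε) = tr((ε±)²). Then: I₁⁺(ε) + I₁⁻(ε) = tr ε and I₁⁺(ε) · I₁⁻(ε) = 0; tr(ε²) = I₂⁺(ε) + I₂⁻(ε); and consequently the strain energy splits additively, Ψ̃(I₁(ε), I₂(ε)) = Ψ̃(I₁⁺(ε), I₂⁺(ε)) + Ψ̃(I₁⁻(ε), I₂⁻(ε)), where Ψ̃(I₁, I₂) = (K/2)I₁² − μ(I₁²/3 − I₂). -/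

import Mathlib

open Matrix

lemma trace_vvmul_vvmul (N : Fin 3 → Fin 3 → ℝ) (i j : Fin 3) :
    (vecMulVec (N i) (N i) * vecMulVec (N j) (N j)).trace = (N i ⬝ᵥ N j) * (N j ⬝ᵥ N i) := by
  simp only [trace, diag_apply, mul_apply, vecMulVec_apply, dotProduct, Finset.sum_mul,
    Finset.mul_sum]
  rw [Finset.sum_comm]
  apply Finset.sum_congr rfl; intro a _
  apply Finset.sum_congr rfl; intro b _
  ring

lemma trace_sum_sum (N : Fin 3 → Fin 3 → ℝ)
    (horth : ∀ i j, N i ⬝ᵥ N j = if i = j then (1:ℝ) else 0) (c d : Fin 3 → ℝ) :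
    ((∑ i, c i • vecMulVec (N i) (N i)) * (∑ j, d j • vecMulVec (N j) (N j))).trace
      = ∑ i, c i * d i := by
  rw [Finset.sum_mul_sum, trace_sum]
  simp only [trace_sum, smul_mul_smul_comm, trace_smul, smul_eq_mul, trace_vvmul_vvmul, horth]
  simp [Finset.sum_ite_eq, mul_comm]

lemma spectral (ε : Matrix (Fin 3) (Fin 3) ℝ) (lam : Fin 3 → ℝ) (N : Fin 3 → Fin 3 → ℝ)
    (heig : ∀ i, ε.mulVec (N i) = lam i • N i)
    (horth : ∀ i j, N i ⬝ᵥ N j = if i = j then (1:ℝ) else 0) :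
    ε = ∑ i, lam i • vecMulVec (N i) (N i) := by
  have hQ : (Matrix.of N) * (Matrix.of N)ᵀ = 1 := by
    ext i j
    simpa [mul_apply, dotProduct, Matrix.one_apply] using horth i j
  have hQ' : (Matrix.of N)ᵀ * (Matrix.of N) = 1 := mul_eq_one_comm.mp hQ
  have hcomp : (∑ i, vecMulVec (N i) (N i)) = 1 := by
    rw [← hQ']
    ext a b
    simp [mul_apply, vecMulVec_apply, Matrix.sum_apply]
  calc ε = ε * ∑ i, vecMulVec (N i) (N i) := by rw [hcomp, mul_one]
    _ = ∑ i, lam i • vecMulVec (N i) (N i) := by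
        rw [Finset.mul_sum]
        apply Finset.sum_congr rfl
        intro i _
        ext a b
        have := congrFun (heig i) a
        simp only [mulVec, dotProduct, Pi.smul_apply, smul_eq_mul] at this
        simp only [mul_apply, vecMulVec_apply, Matrix.smul_apply, smul_eq_mul]
        calc ∑ k, ε a k * (N i k * N i b) = (∑ k, ε a k * N i k) * N i b := by
              rw [Finset.sum_mul]; exact Finset.sum_congr rfl fun k _ => by ring
          _ = lam i * (N i a * N i b) := by rw [this]; ring

/-- Additive split of the isotropic strain energy via the spectral decomposition:
with `ε± = Σᵢ ⟨lam i⟩± (N i)(N i)ᵀ`, split invariants `I₁± = ⟨tr ε⟩±` and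
`I₂± = tr((ε±)²)` satisfy `I₁⁺ + I₁⁻ = tr ε`, `I₁⁺ ⬝ I₁⁻ = 0`,
`tr(ε²) = I₂⁺ + I₂⁻`, and `Ψ̃(I₁, I₂) = Ψ̃(I₁⁺, I₂⁺) + Ψ̃(I₁⁻, I₂⁻)` where
`Ψ̃(I₁, I₂) = (K/2)I₁² - μ(I₁²/3 - I₂)`. -/
theorem isotropic_energy_split (K μ : ℝ) (hK : 0 < K) (hμ : 0 < μ)
    (ε : Matrix (Fin 3) (Fin 3) ℝ) (hε : ε.IsSymm)
    (lam : Fin 3 → ℝ) (N : Fin 3 → Fin 3 → ℝ)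
    (heig : ∀ i, ε.mulVec (N i) = lam i • N i)
    (horth : ∀ i j, N i ⬝ᵥ N j = if i = j then (1 : ℝ) else 0)
    (εp εm : Matrix (Fin 3) (Fin 3) ℝ)
    (hεp : εp = ∑ i, ((lam i + |lam i|) / 2) • vecMulVec (N i) (N i))
    (hεm : εm = ∑ i, ((lam i - |lam i|) / 2) • vecMulVec (N i) (N i))
    (I₁p I₁m I₂p I₂m : ℝ)
    (hI₁p : I₁p = (ε.trace + |ε.trace|) / 2)
    (hI₁m : I₁m = (ε.trace - |ε.trace|) / 2)
    (hI₂p : I₂p = (εp * εp).trace)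
    (hI₂m : I₂m = (εm * εm).trace) :
    I₁p + I₁m = ε.trace ∧
    I₁p * I₁m = 0 ∧
    (ε * ε).trace = I₂p + I₂m ∧
    (K / 2) * (ε.trace) ^ 2 - μ * ((ε.trace) ^ 2 / 3 - (ε * ε).trace)
      = ((K / 2) * I₁p ^ 2 - μ * (I₁p ^ 2 / 3 - I₂p))
        + ((K / 2) * I₁m ^ 2 - μ * (I₁m ^ 2 / 3 - I₂m)) := by
  have h1 : I₁p + I₁m = ε.trace := by rw [hI₁p, hI₁m]; ring
  have h2 : I₁p * I₁m = 0 := by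
    rw [hI₁p, hI₁m]
    have := sq_abs ε.trace
    nlinarith [sq_abs ε.trace]
  have hεd := spectral ε lam N heig horth
  have htr2 : (ε * ε).trace = ∑ i, lam i * lam i := by
    rw [hεd]; exact trace_sum_sum N horth lam lam
  have hp : I₂p = ∑ i, ((lam i + |lam i|) / 2) * ((lam i + |lam i|) / 2) := by
    rw [hI₂p, hεp]; exact trace_sum_sum N horth _ _
  have hm : I₂m = ∑ i, ((lam i - |lam i|) / 2) * ((lam i - |lam i|) / 2) := by
    rw [hI₂m, hεm]; exact trace_sum_sum N horth _ _
  have h3 : (ε * ε).trace = I₂p + I₂m := by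
    rw [htr2, hp, hm, ← Finset.sum_add_distrib]
    apply Finset.sum_congr rfl
    intro i _
    have := sq_abs (lam i)
    nlinarith [sq_abs (lam i)]
  refine ⟨h1, h2, h3, ?_⟩
  have hsq : I₁p ^ 2 + I₁m ^ 2 = ε.trace ^ 2 := by linear_combination (I₁p + I₁m + ε.trace) * h1 - 2 * h2
  rw [h3]
  linear_combination (μ / 3 - K / 2) * hsq
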